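/- Let λ ⊇ μ be partitions with at most r parts (padded by zeros) and f = (f_1,…,f_r) nonnegative integers. Consider the acyclic digraph with vertex set ℤ × ℤ_{≥0} and, for every vertex (s,t) with t ≥ 1, a vertical edge from (s,t) to (s,t−1) of weight 1 and a diagonal edge from (s,t) to (s−1,t−1) of weight z_t + b_{t−s}. Set u_i = (λ_i − i, f_i) and v_i = (μ_i − i, 0) for i = 1,…,r. Then s̃_{λ/μ,f}(z|b) = Σ_{(P_1,…,P_r)} ∏_{i=1}^r w(P_i), where the sum is over all r-tuples of directed paths P_i from u_i to v_i that are pairwise vertex-disjoint, and w(P) is the product of the weights of the edges of P. -/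

import Mathlib

open Finset

noncomputable section

variable {R : Type*} [CommRing R]

/-- The formal power series `1/(1 - x·u)`. -/
def geomSeries (x : R) : PowerSeries R := PowerSeries.mk fun m => x ^ m

/-- `e_u^{[k]}(c)`: the power series `∏_{i=1}^k (1 + c_i u)` for `k ≥ 0`, and
`∏_{i=1}^{-k} (1 - c_i u)⁻¹` for `k < 0`.  The sequence `c` is read at indices `1, 2, …`. -/
def eSer (k : ℤ) (c : ℕ → R) : PowerSeries R :=
  if 0 ≤ k then ∏ i ∈ Finset.range k.toNat, (1 + PowerSeries.C (c (i + 1)) * PowerSeries.X)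
  else ∏ i ∈ Finset.range (-k).toNat, geomSeries (c (i + 1))

/-- `q_u(x) = ∏_{i=1}^n (1 + x_i u)/(1 - x_i u)`, with `n` x-variables. -/
def qSer (n : ℕ) (x : ℕ → R) : PowerSeries R :=
  ∏ i ∈ Finset.range n,
    ((1 + PowerSeries.C (x (i + 1)) * PowerSeries.X) * geomSeries (x (i + 1)))

/-- The coefficient of `u^m` (`m : ℤ`) of a power series; zero when `m < 0`. -/
def coeffZ (m : ℤ) (φ : PowerSeries R) : R :=
  if 0 ≤ m then PowerSeries.coeff m.toNat φ else 0

/-- `q_m^{[ℓ]}(x|c)`: the coefficient of `u^m` in `q_u(x)·e_u^{[ℓ]}(c)`. -/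
def qC (m ℓ : ℤ) (n : ℕ) (x c : ℕ → R) : R := coeffZ m (qSer n x * eSer ℓ c)

/-- `q_m^{[k|ℓ]}(x;z|c)`: the coefficient of `u^m` in `q_u(x)·e_u^{[k]}(z)·e_u^{[ℓ]}(c)`. -/
def qC2 (m k ℓ : ℤ) (n : ℕ) (x z c : ℕ → R) : R :=
  coeffZ m (qSer n x * eSer k z * eSer ℓ c)

/-- `e_m^{[k]}(c)`. -/
def eC (m k : ℤ) (c : ℕ → R) : R := coeffZ m (eSer k c)

/-- `e_m^{[k|ℓ]}(z|c)`: the coefficient of `u^m` in `e_u^{[k]}(z)·e_u^{[ℓ]}(c)`. -/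
def eC2 (m k ℓ : ℤ) (z c : ℕ → R) : R := coeffZ m (eSer k z * eSer ℓ c)

/-- Extension of `b` to all integer indices using the convention `b_{-i} = -b_{i+1}` for
`i ≥ 0`; positive indices are untouched.  This also implements the `⋆` substitution. -/
def bext (b : ℤ → R) : ℤ → R := fun j => if 0 < j then b j else -b (1 - j)

/-- `ε(0) = 1` and `ε(m) = 2·(-1)^m` for `m ≥ 1`. -/
def pfEps (m : ℕ) : ℤ := if m = 0 then 1 else 2 * (-1) ^ m

/-- The subscript `α_i + Σ_{j>i} m_{ij} − Σ_{j<i} m_{ji}` in the Schur–Pfaffian. -/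
def pfIdx {r : ℕ} (α : Fin r → ℤ) (m : Fin r → Fin r → ℕ) (i : Fin r) : ℤ :=
  α i + ∑ j, (if i < j then (m i j : ℤ) else 0) - ∑ j, (if j < i then (m j i : ℤ) else 0)

/-- The Schur–Pfaffian `Pf[c^{(1)}_{α_1} ⋯ c^{(r)}_{α_r}]`, as the (finitely supported) sum
over tuples of nonnegative integers `(m_{ij})_{1 ≤ i < j ≤ r}`. -/
def schurPf {r : ℕ} (c : Fin r → ℤ → R) (α : Fin r → ℤ) : R :=
  ∑ᶠ m ∈ {m : Fin r → Fin r → ℕ | ∀ i j, ¬ i < j → m i j = 0},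
    (∏ i, ∏ j, if i < j then (pfEps (m i j) : R) else 1) * ∏ i, c i (pfIdx α m i)

/-- The alphabet of primed, unmarked and circled numbers. -/
inductive MSTEntry where
  | prime : ℕ → MSTEntry
  | unmarked : ℕ → MSTEntry
  | circ : ℕ → MSTEntry
deriving DecidableEq

namespace MSTEntry

/-- Whether an entry is circled (`1`) or not (`0`). -/
def isCirc : MSTEntry → ℕ
  | circ _ => 1
  | _ => 0

/-- Key realizing the order `1' < 1 < 2' < 2 < ⋯` within each class. -/
def key : MSTEntry → ℕ
  | prime k => 2 * k - 1
  | unmarked k => 2 * k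
  | circ k => k

/-- The numeric value of an entry. -/
def val : MSTEntry → ℕ
  | prime k => k
  | unmarked k => k
  | circ k => k

/-- The total order `1' < 1 < 2' < 2 < ⋯ < 1° < 2° < ⋯` on entries of positive value. -/
def le (a b : MSTEntry) : Prop :=
  a.isCirc < b.isCirc ∨ (a.isCirc = b.isCirc ∧ a.key ≤ b.key)

end MSTEntry

/-- The shifted Young diagram of a strict partition `λ` of length `r`:
boxes `(i, j)` with `1 ≤ i ≤ r` and `i ≤ j ≤ λ_i + i - 1` (rows and columns 1-indexed). -/
def shiftedDiag (r : ℕ) (lam : ℕ → ℕ) : Set (ℕ × ℕ) :=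
  {p | 1 ≤ p.1 ∧ p.1 ≤ r ∧ p.1 ≤ p.2 ∧ p.2 ≤ lam p.1 + p.1 - 1}

/-- `T` is a marked shifted tableau of the flagged strict partition `(λ, f)` whose unmarked
and primed entries have numeric value at most `n` (normalized to `unmarked 0` off the
diagram). -/
def IsMST (n r : ℕ) (lam f : ℕ → ℕ) (T : ℕ × ℕ → MSTEntry) : Prop :=
  (∀ p, p ∉ shiftedDiag r lam → T p = .unmarked 0) ∧
  (∀ p ∈ shiftedDiag r lam, 1 ≤ (T p).val) ∧
  (∀ i j j', (i, j) ∈ shiftedDiag r lam → (i, j') ∈ shiftedDiag r lam → j ≤ j' →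
    (T (i, j)).le (T (i, j'))) ∧
  (∀ i i' j, (i, j) ∈ shiftedDiag r lam → (i', j) ∈ shiftedDiag r lam → i ≤ i' →
    (T (i, j)).le (T (i', j))) ∧
  (∀ i i' j k k', (i, j) ∈ shiftedDiag r lam → (i', j) ∈ shiftedDiag r lam → i < i' →
    T (i, j) = .unmarked k → T (i', j) = .unmarked k' → k < k') ∧
  (∀ i j j' k k', (i, j) ∈ shiftedDiag r lam → (i, j') ∈ shiftedDiag r lam → j < j' →
    T (i, j) = .prime k → T (i, j') = .prime k' → k < k') ∧
  (∀ i j j' k k', (i, j) ∈ shiftedDiag r lam → (i, j') ∈ shiftedDiag r lam → j < j' →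
    T (i, j) = .circ k → T (i, j') = .circ k' → k < k') ∧
  (∀ p ∈ shiftedDiag r lam, (T p).le (.circ (f p.1))) ∧
  (∀ p ∈ shiftedDiag r lam, ∀ k, (T p = .unmarked k ∨ T p = .prime k) → k ≤ n)

/-- The factor of the weight `(xz|b)^T` contributed by the entry at box `p`.  The convention
`b_{-i} = -b_{i+1}` is implemented by `bext`. -/
def mstFactor (x z : ℕ → R) (b : ℤ → R) (p : ℕ × ℕ) : MSTEntry → R
  | .unmarked k => x k + bext b ((p.2 : ℤ) - (p.1 : ℤ))
  | .prime k => x k - bext b ((p.2 : ℤ) - (p.1 : ℤ))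
  | .circ k => z k + bext b ((k : ℤ) + (p.1 : ℤ) - (p.2 : ℤ))

/-- The weight `(xz|b)^T` of a marked shifted tableau. -/
def mstWeight (r : ℕ) (lam : ℕ → ℕ) (x z : ℕ → R) (b : ℤ → R) (T : ℕ × ℕ → MSTEntry) : R :=
  ∏ i ∈ Finset.range r, ∏ j ∈ Finset.range (lam (i + 1)),
    mstFactor x z b (i + 1, i + 1 + j) (T (i + 1, i + 1 + j))

/-- The flagged factorial Q-function `Q_{λ,f}(x;z|b)`, with `n` x-variables. -/
def Qflag (n r : ℕ) (lam f : ℕ → ℕ) (x z : ℕ → R) (b : ℤ → R) : R :=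
  ∑ᶠ T ∈ {T : ℕ × ℕ → MSTEntry | IsMST n r lam f T}, mstWeight r lam x z b T

/-- Ivanov's factorial Q-function `Q_λ(x|b)`: the case of the zero flag (no circled
entries, so the z-variables do not occur). -/
def QIvanov (n r : ℕ) (lam : ℕ → ℕ) (x : ℕ → R) (b : ℤ → R) : R :=
  Qflag n r lam (fun _ => 0) x (fun _ => 0) b

/-- The skew Young diagram `κ/ν`: boxes `(i, j)` with `1 ≤ i ≤ r`, `ν_i < j ≤ κ_i`. -/
def skewDiag (r : ℕ) (kap nu : ℕ → ℕ) : Set (ℕ × ℕ) :=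
  {p | 1 ≤ p.1 ∧ p.1 ≤ r ∧ nu p.1 < p.2 ∧ p.2 ≤ kap p.1}

/-- `t` is a row-strict flagged tableau of `(κ/ν, f)` (normalized to `0` off the diagram). -/
def IsRST (r : ℕ) (kap nu f : ℕ → ℕ) (t : ℕ × ℕ → ℕ) : Prop :=
  (∀ p, p ∉ skewDiag r kap nu → t p = 0) ∧
  (∀ p ∈ skewDiag r kap nu, 1 ≤ t p) ∧
  (∀ i j j', (i, j) ∈ skewDiag r kap nu → (i, j') ∈ skewDiag r kap nu → j < j' →
    t (i, j) < t (i, j')) ∧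
  (∀ i i' j, (i, j) ∈ skewDiag r kap nu → (i', j) ∈ skewDiag r kap nu → i ≤ i' →
    t (i, j) ≤ t (i', j)) ∧
  (∀ p ∈ skewDiag r kap nu, t p ≤ f p.1)

/-- The weight `∏_{e ∈ T} (z_{|e|} + b_{|e| + r(e) - c(e)})` of a row-strict flagged tableau. -/
def rstWeight (r : ℕ) (kap nu : ℕ → ℕ) (z : ℕ → R) (b : ℤ → R) (t : ℕ × ℕ → ℕ) : R :=
  ∏ i ∈ Finset.range r, ∏ j ∈ Finset.range (kap (i + 1) - nu (i + 1)),
    (z (t (i + 1, nu (i + 1) + 1 + j)) +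
      b ((t (i + 1, nu (i + 1) + 1 + j) : ℤ) + ((i : ℤ) + 1) - ((nu (i + 1) : ℤ) + 1 + (j : ℤ))))

/-- The row-strict flagged skew factorial Schur polynomial `s̃_{κ/ν,f}(z|b)`. -/
def sTilde (r : ℕ) (kap nu f : ℕ → ℕ) (z : ℕ → R) (b : ℤ → R) : R :=
  ∑ᶠ t ∈ {t : ℕ × ℕ → ℕ | IsRST r kap nu f t}, rstWeight r kap nu z b t


/-- The edge relation of the lattice-path digraph on `ℤ × ℤ_{≥0}`: from `(s,t)` with
`t ≥ 1` there is a vertical edge to `(s, t-1)` and a diagonal edge to `(s-1, t-1)`. -/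
def LatticeEdge (a c : ℤ × ℕ) : Prop :=
  1 ≤ a.2 ∧ (c = (a.1, a.2 - 1) ∨ c = (a.1 - 1, a.2 - 1))

/-- The weight of an edge from `a` to `c`: `z_t + b_{t-s}` for the diagonal edge with
source `(s,t)`, and `1` for a vertical edge. -/
def edgeWt (z : ℕ → R) (b : ℤ → R) (a c : ℤ × ℕ) : R :=
  if c.1 = a.1 - 1 then z a.2 + b ((a.2 : ℤ) - a.1) else 1

/-- `p` (a list of vertices) is a directed path from `u` to `v`. -/
def IsLatticePath (u v : ℤ × ℕ) (p : List (ℤ × ℕ)) : Prop :=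
  p.head? = some u ∧ p.getLast? = some v ∧ p.Chain' LatticeEdge

/-- The weight of a path: the product of the weights of its edges. -/
def pathWt (z : ℕ → R) (b : ℤ → R) (p : List (ℤ × ℕ)) : R :=
  ((p.zip p.tail).map fun q => edgeWt z b q.1 q.2).prod

namespace LGV

/-- The canonical descending path through vertices `(g k, k)` for `k = n, n-1, …, 0`. -/
def canon (g : ℕ → ℤ) : ℕ → List (ℤ × ℕ)
  | 0 => [(g 0, 0)]
  | n + 1 => (g (n + 1), (n + 1 : ℕ)) :: canon g n

lemma canon_succ (g : ℕ → ℤ) (n : ℕ) :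
    canon g (n + 1) = (g (n + 1), (n + 1 : ℕ)) :: canon g n := rfl

lemma canon_head (g : ℕ → ℤ) (n : ℕ) : (canon g n).head? = some (g n, n) := by
  cases n <;> rfl

lemma canon_getLast (g : ℕ → ℤ) (n : ℕ) : (canon g n).getLast? = some (g 0, 0) := by
  induction n with
  | zero => rfl
  | succ n ih =>
    cases n with
    | zero => rfl
    | succ m =>
      rw [canon_succ, canon_succ, List.getLast?_cons_cons, ← canon_succ]
      exact ih

lemma mem_canon {x : ℤ × ℕ} {g : ℕ → ℤ} {n : ℕ} :
    x ∈ canon g n ↔ ∃ h, h ≤ n ∧ x = (g h, h) := by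
  induction n with
  | zero =>
    simp only [canon, List.mem_singleton]
    constructor
    · rintro rfl; exact ⟨0, le_refl _, rfl⟩
    · rintro ⟨h, hh, rfl⟩
      have : h = 0 := Nat.le_zero.mp hh
      subst this; rfl
  | succ n ih =>
    simp only [canon_succ, List.mem_cons, ih]
    constructor
    · rintro (rfl | ⟨h, hh, rfl⟩)
      · exact ⟨n + 1, le_refl _, rfl⟩
      · exact ⟨h, by omega, rfl⟩
    · rintro ⟨h, hh, rfl⟩
      rcases Nat.lt_or_ge h (n + 1) with hlt | hge
      · exact Or.inr ⟨h, by omega, rfl⟩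
      · have : h = n + 1 := by omega
        subst this; exact Or.inl rfl

lemma canon_congr {g g' : ℕ → ℤ} {n : ℕ} (h : ∀ k, k ≤ n → g k = g' k) :
    canon g n = canon g' n := by
  induction n with
  | zero => simp [canon, h 0 (le_refl _)]
  | succ n ih =>
    rw [canon_succ, canon_succ, h (n + 1) (le_refl _),
      ih (fun k hk => h k (by omega))]

lemma canon_inj {g g' : ℕ → ℤ} {n : ℕ} (h : canon g n = canon g' n) :
    ∀ k, k ≤ n → g k = g' k := by
  induction n with
  | zero =>
    intro k hk
    have : k = 0 := Nat.le_zero.mp hk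
    subst this
    simpa [canon] using h
  | succ n ih =>
    rw [canon_succ, canon_succ] at h
    injection h with h1 h2
    intro k hk
    rcases Nat.lt_or_ge k (n + 1) with hlt | hge
    · exact ih h2 k (by omega)
    · have : k = n + 1 := by omega
      subst this
      simpa using congrArg Prod.fst h1

lemma chain'_canon {g : ℕ → ℤ} {n : ℕ}
    (hg : ∀ k, k < n → g (k + 1) - g k = 0 ∨ g (k + 1) - g k = 1) :
    (canon g n).Chain' LatticeEdge := by
  induction n with
  | zero => exact List.isChain_singleton _
  | succ n ih =>
    rw [canon_succ, List.Chain', List.isChain_cons]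
    refine ⟨?_, ih (fun k hk => hg k (by omega))⟩
    intro y hy
    rw [canon_head] at hy
    have hy' : y = (g n, n) := by simpa using hy.symm
    subst hy'
    refine ⟨by simp, ?_⟩
    rcases hg n (by omega) with h | h
    · left; simp only [Prod.mk.injEq]; constructor <;> omega
    · right; simp only [Prod.mk.injEq]; constructor <;> omega

lemma isLatticePath_canon {g : ℕ → ℤ} {n : ℕ}
    (hg : ∀ k, k < n → g (k + 1) - g k = 0 ∨ g (k + 1) - g k = 1) :
    IsLatticePath (g n, n) (g 0, 0) (canon g n) :=
  ⟨canon_head g n, canon_getLast g n, chain'_canon hg⟩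

lemma path_canonical {p : List (ℤ × ℕ)} :
    ∀ {n : ℕ} {s₀ s₁ : ℤ}, IsLatticePath (s₀, n) (s₁, 0) p →
    ∃ g : ℕ → ℤ, g n = s₀ ∧ g 0 = s₁ ∧
      (∀ k, k < n → g (k + 1) - g k = 0 ∨ g (k + 1) - g k = 1) ∧ p = canon g n := by
  induction p with
  | nil => intro n s₀ s₁ h; simp [IsLatticePath] at h
  | cons x q ih =>
    intro n s₀ s₁ h
    obtain ⟨h1, h2, h3⟩ := h
    rw [List.head?_cons, Option.some_inj] at h1
    subst h1
    cases q with
    | nil =>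
      have h2' : (s₀, n) = (s₁, 0) := by simpa [List.getLast?] using h2
      have hn : n = 0 := by simpa using congrArg Prod.snd h2'
      have hs : s₀ = s₁ := by simpa using congrArg Prod.fst h2'
      subst hn
      exact ⟨fun _ => s₀, rfl, hs, fun k hk => absurd hk (Nat.not_lt_zero k), rfl⟩
    | cons y q' =>
      rw [List.Chain', List.isChain_cons_cons] at h3
      obtain ⟨⟨hn1, hy⟩, hchain⟩ := h3
      obtain ⟨m, rfl⟩ : ∃ m, n = m + 1 := ⟨n - 1, by omega⟩
      have hy2 : y.2 = m := by rcases hy with rfl | rfl <;> rfl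
      have hpath : IsLatticePath (y.1, m) (s₁, 0) (y :: q') := by
        refine ⟨?_, ?_, hchain⟩
        · rw [List.head?_cons, ← hy2]
        · rw [← List.getLast?_cons_cons (a := ((s₀, m + 1) : ℤ × ℕ))]
          exact h2
      obtain ⟨g, hg1, hg0, hgstep, hq⟩ := ih hpath
      refine ⟨Function.update g (m + 1) s₀, by simp, ?_, ?_, ?_⟩
      · rw [Function.update_of_ne (by omega)]; exact hg0
      · intro k hk
        rcases Nat.lt_or_ge k m with hlt | hge
        · rw [Function.update_of_ne (by omega), Function.update_of_ne (by omega)]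
          exact hgstep k hlt
        · have : k = m := by omega
          subst this
          rw [Function.update_self, Function.update_of_ne (by omega), hg1]
          rcases hy with rfl | rfl
          · left; simp
          · right; simp
      · rw [canon_succ]
        rw [canon_congr (g := Function.update g (m + 1) s₀) (g' := g)
          (fun k hk => Function.update_of_ne (by omega) _ _)]
        rw [← hq, Function.update_self]

lemma pathWt_cons_cons {R : Type*} [CommRing R] (z : ℕ → R) (b : ℤ → R)
    (a c : ℤ × ℕ) (l : List (ℤ × ℕ)) :
    pathWt z b (a :: c :: l) = edgeWt z b a c * pathWt z b (c :: l) := by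
  simp [pathWt]

lemma pathWt_canon {R : Type*} [CommRing R] (z : ℕ → R) (b : ℤ → R) (g : ℕ → ℤ) (n : ℕ) :
    pathWt z b (canon g n) =
      ∏ k ∈ Finset.range n, edgeWt z b (g (k + 1), (k + 1 : ℕ)) (g k, k) := by
  induction n with
  | zero => simp [canon, pathWt]
  | succ n ih =>
    obtain ⟨l, hl⟩ : ∃ l, canon g n = (g n, n) :: l := by cases n <;> exact ⟨_, rfl⟩
    rw [Finset.prod_range_succ, ← ih, canon_succ, hl, pathWt_cons_cons, ← hl]
    ring


lemma mem_skewDiag {r : ℕ} {kap nu : ℕ → ℕ} {i c : ℕ} :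
    (i, c) ∈ skewDiag r kap nu ↔ 1 ≤ i ∧ i ≤ r ∧ nu i < c ∧ c ≤ kap i := Iff.rfl

lemma initial_seg {a b : ℕ} {S : Finset ℕ} (hsub : S ⊆ Finset.Ioc a b)
    (hdown : ∀ c ∈ S, ∀ c', a < c' → c' ≤ c → c' ∈ S) :
    S = Finset.Ioc a (a + S.card) := by
  ext c
  simp only [Finset.mem_Ioc]
  constructor
  · intro hc
    have h1 : Finset.Ioc a c ⊆ S := by
      intro c' hc'
      rw [Finset.mem_Ioc] at hc'
      exact hdown c hc c' hc'.1 hc'.2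
    have h2 := Finset.card_le_card h1
    rw [Nat.card_Ioc] at h2
    have h3 := hsub hc
    rw [Finset.mem_Ioc] at h3
    exact ⟨h3.1, by omega⟩
  · rintro ⟨h1, h2⟩
    by_contra hc
    have h3 : S ⊆ Finset.Ioc a (c - 1) := by
      intro s hs
      have hsIoc := hsub hs
      rw [Finset.mem_Ioc] at hsIoc ⊢
      refine ⟨hsIoc.1, ?_⟩
      by_contra hgt
      exact hc (hdown s hs c h1 (by omega))
    have h4 := Finset.card_le_card h3
    rw [Nat.card_Ioc] at h4
    omega

/-- The number of entries of row `i` that are `≤ h`. -/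
def rowCnt (kap nu : ℕ → ℕ) (t : ℕ × ℕ → ℕ) (i h : ℕ) : ℕ :=
  ((Finset.Ioc (nu i) (kap i)).filter (fun c => t (i, c) ≤ h)).card

/-- The horizontal position of the path of row `i` at height `h`. -/
def sigf (kap nu : ℕ → ℕ) (t : ℕ × ℕ → ℕ) (i : ℕ) (h : ℕ) : ℤ :=
  (nu i : ℤ) - (i : ℤ) + (rowCnt kap nu t i h : ℤ)

section RowLemmas

variable {r : ℕ} {kap nu f : ℕ → ℕ} {t : ℕ × ℕ → ℕ}

lemma filter_row (ht : IsRST r kap nu f t) (i : ℕ) (hi1 : 1 ≤ i) (hir : i ≤ r) (h : ℕ) :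
    (Finset.Ioc (nu i) (kap i)).filter (fun c => t (i, c) ≤ h) =
      Finset.Ioc (nu i) (nu i + rowCnt kap nu t i h) := by
  obtain ⟨-, -, hrow, -, -⟩ := ht
  refine initial_seg (Finset.filter_subset _ _) ?_
  intro c hc c' h1 h2
  rw [Finset.mem_filter, Finset.mem_Ioc] at hc ⊢
  obtain ⟨⟨hc1, hc2⟩, hc3⟩ := hc
  refine ⟨⟨h1, le_trans h2 hc2⟩, le_trans ?_ hc3⟩
  rcases eq_or_lt_of_le h2 with rfl | hlt
  · exact le_refl _
  · exact le_of_lt (hrow i c' c ⟨hi1, hir, h1, le_trans h2 hc2⟩ ⟨hi1, hir, hc1, hc2⟩ hlt)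

lemma le_iff_col (ht : IsRST r kap nu f t) (i : ℕ) (hi1 : 1 ≤ i) (hir : i ≤ r) {c h : ℕ}
    (hc : c ∈ Finset.Ioc (nu i) (kap i)) :
    t (i, c) ≤ h ↔ c ≤ nu i + rowCnt kap nu t i h := by
  have hfr := filter_row ht i hi1 hir h
  constructor
  · intro hle
    have hm : c ∈ Finset.Ioc (nu i) (nu i + rowCnt kap nu t i h) :=
      hfr ▸ (Finset.mem_filter.mpr ⟨hc, hle⟩)
    exact (Finset.mem_Ioc.mp hm).2
  · intro hle
    have hmem : c ∈ (Finset.Ioc (nu i) (kap i)).filter (fun c => t (i, c) ≤ h) := by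
      rw [hfr]
      exact Finset.mem_Ioc.mpr ⟨(Finset.mem_Ioc.mp hc).1, hle⟩
    exact (Finset.mem_filter.mp hmem).2

lemma rowCnt_zero (ht : IsRST r kap nu f t) (i : ℕ) (hi1 : 1 ≤ i) (hir : i ≤ r) :
    rowCnt kap nu t i 0 = 0 := by
  obtain ⟨-, hpos, -, -, -⟩ := ht
  rw [rowCnt, Finset.card_eq_zero, Finset.filter_eq_empty_iff]
  intro c hc
  rw [Finset.mem_Ioc] at hc
  have := hpos (i, c) ⟨hi1, hir, hc.1, hc.2⟩
  omega

lemma rowCnt_top (ht : IsRST r kap nu f t) (i : ℕ) (hi1 : 1 ≤ i) (hir : i ≤ r) :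
    rowCnt kap nu t i (f i) = kap i - nu i := by
  obtain ⟨-, -, -, -, hflag⟩ := ht
  rw [rowCnt, Finset.filter_true_of_mem, Nat.card_Ioc]
  intro c hc
  rw [Finset.mem_Ioc] at hc
  exact hflag (i, c) ⟨hi1, hir, hc.1, hc.2⟩

lemma rowCnt_mono (i : ℕ) {h h' : ℕ} (hh : h ≤ h') :
    rowCnt kap nu t i h ≤ rowCnt kap nu t i h' := by
  apply Finset.card_le_card
  intro c hc
  rw [Finset.mem_filter] at hc ⊢
  exact ⟨hc.1, le_trans hc.2 hh⟩

lemma rowCnt_step (ht : IsRST r kap nu f t) (i : ℕ) (hi1 : 1 ≤ i) (hir : i ≤ r) (h : ℕ) :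
    rowCnt kap nu t i (h + 1) ≤ rowCnt kap nu t i h + 1 := by
  obtain ⟨-, -, hrow, -, -⟩ := ht
  have hsub1 : (Finset.Ioc (nu i) (kap i)).filter (fun c => t (i, c) ≤ h + 1) ⊆
      (Finset.Ioc (nu i) (kap i)).filter (fun c => t (i, c) ≤ h) ∪
      (Finset.Ioc (nu i) (kap i)).filter (fun c => t (i, c) = h + 1) := by
    intro c hc
    rw [Finset.mem_filter] at hc
    rw [Finset.mem_union, Finset.mem_filter, Finset.mem_filter]
    rcases Nat.lt_or_ge (t (i, c)) (h + 1) with hlt | hge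
    · exact Or.inl ⟨hc.1, by omega⟩
    · exact Or.inr ⟨hc.1, by omega⟩
  have hcard1 : ((Finset.Ioc (nu i) (kap i)).filter (fun c => t (i, c) = h + 1)).card ≤ 1 := by
    rw [Finset.card_le_one]
    intro a ha b hb
    rw [Finset.mem_filter, Finset.mem_Ioc] at ha hb
    by_contra hne
    rcases Nat.lt_or_ge a b with hab | hab
    · have := hrow i a b ⟨hi1, hir, ha.1.1, ha.1.2⟩ ⟨hi1, hir, hb.1.1, hb.1.2⟩ hab
      omega
    · have hba : b < a := by omega
      have := hrow i b a ⟨hi1, hir, hb.1.1, hb.1.2⟩ ⟨hi1, hir, ha.1.1, ha.1.2⟩ hba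
      omega
  have h1 := Finset.card_le_card hsub1
  have h2 := Finset.card_union_le
    ((Finset.Ioc (nu i) (kap i)).filter (fun c => t (i, c) ≤ h))
    ((Finset.Ioc (nu i) (kap i)).filter (fun c => t (i, c) = h + 1))
  rw [rowCnt, rowCnt]
  omega

lemma rowCnt_entry (ht : IsRST r kap nu f t) (i : ℕ) (hi1 : 1 ≤ i) (hir : i ≤ r) {c : ℕ}
    (hc : c ∈ Finset.Ioc (nu i) (kap i)) :
    rowCnt kap nu t i (t (i, c)) = c - nu i := by
  have h1 : c ≤ nu i + rowCnt kap nu t i (t (i, c)) :=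
    (le_iff_col ht i hi1 hir hc).mp (le_refl _)
  have hcIoc := Finset.mem_Ioc.mp hc
  rcases Nat.lt_or_ge c (nu i + rowCnt kap nu t i (t (i, c))) with hlt | hge
  · exfalso
    have hrow := ht.2.2.1
    have hc' : nu i + rowCnt kap nu t i (t (i, c)) ∈
        (Finset.Ioc (nu i) (kap i)).filter (fun c' => t (i, c') ≤ t (i, c)) := by
      rw [filter_row ht i hi1 hir]
      exact Finset.mem_Ioc.mpr ⟨by omega, le_refl _⟩
    rw [Finset.mem_filter, Finset.mem_Ioc] at hc'
    have := hrow i c (nu i + rowCnt kap nu t i (t (i, c)))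
      ⟨hi1, hir, hcIoc.1, hcIoc.2⟩ ⟨hi1, hir, hc'.1.1, hc'.1.2⟩ hlt
    omega
  · omega

lemma exists_entry (ht : IsRST r kap nu f t) (i : ℕ) (hi1 : 1 ≤ i) (hir : i ≤ r) (h : ℕ)
    (hstep : rowCnt kap nu t i h < rowCnt kap nu t i (h + 1)) :
    ∃ c, c ∈ Finset.Ioc (nu i) (kap i) ∧ t (i, c) = h + 1 := by
  have hc : nu i + rowCnt kap nu t i (h + 1) ∈
      (Finset.Ioc (nu i) (kap i)).filter (fun c => t (i, c) ≤ h + 1) := by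
    rw [filter_row ht i hi1 hir]
    exact Finset.mem_Ioc.mpr ⟨by omega, le_refl _⟩
  rw [Finset.mem_filter] at hc
  refine ⟨nu i + rowCnt kap nu t i (h + 1), hc.1, ?_⟩
  have hnot : ¬ t (i, nu i + rowCnt kap nu t i (h + 1)) ≤ h := by
    intro hle
    have := (le_iff_col ht i hi1 hir hc.1).mp hle
    omega
  omega

end RowLemmas


section MainLemmas

variable {r : ℕ} {kap nu f : ℕ → ℕ} {t : ℕ × ℕ → ℕ}

lemma sigf_zero (ht : IsRST r kap nu f t) (i : ℕ) (hi1 : 1 ≤ i) (hir : i ≤ r) :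
    sigf kap nu t i 0 = (nu i : ℤ) - (i : ℤ) := by
  rw [sigf, rowCnt_zero ht i hi1 hir]; push_cast; ring

lemma sigf_top (ht : IsRST r kap nu f t) (i : ℕ) (hi1 : 1 ≤ i) (hir : i ≤ r)
    (hnk : nu i ≤ kap i) :
    sigf kap nu t i (f i) = (kap i : ℤ) - (i : ℤ) := by
  rw [sigf, rowCnt_top ht i hi1 hir]; omega

lemma sigf_step (ht : IsRST r kap nu f t) (i : ℕ) (hi1 : 1 ≤ i) (hir : i ≤ r) (k : ℕ) :
    sigf kap nu t i (k + 1) - sigf kap nu t i k = 0 ∨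
      sigf kap nu t i (k + 1) - sigf kap nu t i k = 1 := by
  have h1 := rowCnt_step ht i hi1 hir k
  have h2 := rowCnt_mono (kap := kap) (nu := nu) (t := t) i (show k ≤ k + 1 by omega)
  simp only [sigf]
  omega

lemma row_weight {R : Type*} [CommRing R] (z : ℕ → R) (b : ℤ → R)
    (ht : IsRST r kap nu f t) (i : ℕ) (hi1 : 1 ≤ i) (hir : i ≤ r) :
    (∏ j ∈ Finset.range (kap i - nu i),
      (z (t (i, nu i + 1 + j)) +
        b ((t (i, nu i + 1 + j) : ℤ) + (i : ℤ) - ((nu i : ℤ) + 1 + (j : ℤ))))) =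
    pathWt z b (canon (sigf kap nu t i) (f i)) := by
  have hrow := ht.2.2.1
  have hpos := ht.2.1
  have hflag := ht.2.2.2.2
  rw [pathWt_canon]
  have hval : ∀ j, j < kap i - nu i →
      (z (t (i, nu i + 1 + j)) +
        b ((t (i, nu i + 1 + j) : ℤ) + (i : ℤ) - ((nu i : ℤ) + 1 + (j : ℤ)))) =
      edgeWt z b (sigf kap nu t i ((t (i, nu i + 1 + j) - 1) + 1),
          ((t (i, nu i + 1 + j) - 1) + 1 : ℕ))
        (sigf kap nu t i (t (i, nu i + 1 + j) - 1), (t (i, nu i + 1 + j) - 1)) := by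
    intro j hj
    have hm : (i, nu i + 1 + j) ∈ skewDiag r kap nu := mem_skewDiag.mpr ⟨hi1, hir, by omega, by omega⟩
    have e1 := hpos _ hm
    have hcIoc : nu i + 1 + j ∈ Finset.Ioc (nu i) (kap i) :=
      Finset.mem_Ioc.mpr ⟨by omega, by omega⟩
    have hre : rowCnt kap nu t i (t (i, nu i + 1 + j)) = (nu i + 1 + j) - nu i :=
      rowCnt_entry ht i hi1 hir hcIoc
    have he1 : t (i, nu i + 1 + j) - 1 + 1 = t (i, nu i + 1 + j) := by omega
    rw [he1]
    have hrlt : rowCnt kap nu t i (t (i, nu i + 1 + j) - 1) < (nu i + 1 + j) - nu i := by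
      by_contra hge
      have := (le_iff_col ht i hi1 hir (h := t (i, nu i + 1 + j) - 1) hcIoc).mpr (by omega)
      omega
    have hstep := rowCnt_step ht i hi1 hir (t (i, nu i + 1 + j) - 1)
    rw [he1] at hstep
    have hcond : (sigf kap nu t i (t (i, nu i + 1 + j) - 1), (t (i, nu i + 1 + j) - 1)).1 =
        (sigf kap nu t i (t (i, nu i + 1 + j)), t (i, nu i + 1 + j)).1 - 1 := by
      simp only [sigf]; omega
    rw [edgeWt, if_pos hcond]
    have hidx : ((t (i, nu i + 1 + j) : ℤ)) -
        (sigf kap nu t i (t (i, nu i + 1 + j)), t (i, nu i + 1 + j)).1 =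
        (t (i, nu i + 1 + j) : ℤ) + (i : ℤ) - ((nu i : ℤ) + 1 + (j : ℤ)) := by
      simp only [sigf, hre]; push_cast; omega
    rw [hidx]
  refine Finset.prod_bij_ne_one (fun j _ _ => t (i, nu i + 1 + j) - 1) ?_ ?_ ?_ ?_
  · intro j hj _
    rw [Finset.mem_range] at hj
    simp only [Finset.mem_range]
    have hm : (i, nu i + 1 + j) ∈ skewDiag r kap nu := mem_skewDiag.mpr ⟨hi1, hir, by omega, by omega⟩
    have h1 : 1 ≤ t (i, nu i + 1 + j) := hpos _ hm
    have h2 : t (i, nu i + 1 + j) ≤ f i := hflag _ hm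
    omega
  · intro j1 hj1 _ j2 hj2 _ heq
    rw [Finset.mem_range] at hj1 hj2
    by_contra hne
    have hm1 : (i, nu i + 1 + j1) ∈ skewDiag r kap nu := mem_skewDiag.mpr ⟨hi1, hir, by omega, by omega⟩
    have hm2 : (i, nu i + 1 + j2) ∈ skewDiag r kap nu := mem_skewDiag.mpr ⟨hi1, hir, by omega, by omega⟩
    have e1 := hpos _ hm1
    have e2 := hpos _ hm2
    rcases Nat.lt_or_ge j1 j2 with hlt | hge
    · have := hrow i _ _ hm1 hm2 (by omega); omega
    · have := hrow i _ _ hm2 hm1 (by omega); omega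
  · intro k hk hne
    rw [Finset.mem_range] at hk
    have hcond : sigf kap nu t i k = sigf kap nu t i (k + 1) - 1 := by
      by_contra hc
      exact hne (if_neg hc)
    have hstep : rowCnt kap nu t i k < rowCnt kap nu t i (k + 1) := by
      simp only [sigf] at hcond; omega
    obtain ⟨c, hcIoc, hce⟩ := exists_entry ht i hi1 hir k hstep
    rw [Finset.mem_Ioc] at hcIoc
    have hje : nu i + 1 + (c - nu i - 1) = c := by omega
    have haeq : t (i, nu i + 1 + (c - nu i - 1)) - 1 = k := by rw [hje]; omega
    have hjmem : c - nu i - 1 ∈ Finset.range (kap i - nu i) := Finset.mem_range.mpr (by omega)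
    refine ⟨c - nu i - 1, hjmem, ?_, haeq⟩
    have := hval (c - nu i - 1) (by omega)
    rw [haeq] at this
    rw [this]
    exact hne
  · intro j hj _
    exact hval j (Finset.mem_range.mp hj)

lemma sig_adj (ht : IsRST r kap nu f t)
    (hlam : ∀ i, 1 ≤ i → i < r → kap (i + 1) ≤ kap i)
    (hmu : ∀ i, 1 ≤ i → i < r → nu (i + 1) ≤ nu i)
    (i : ℕ) (hi1 : 1 ≤ i) (hir : i + 1 ≤ r) (h : ℕ) :
    nu (i + 1) + rowCnt kap nu t (i + 1) h ≤ nu i + rowCnt kap nu t i h := by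
  by_contra hgt
  push_neg at hgt
  have hmu' := hmu i hi1 (by omega)
  have hcnt1 : 1 ≤ rowCnt kap nu t (i + 1) h := by omega
  have hcmem : nu (i + 1) + rowCnt kap nu t (i + 1) h ∈
      (Finset.Ioc (nu (i + 1)) (kap (i + 1))).filter (fun c' => t (i + 1, c') ≤ h) := by
    rw [filter_row ht (i + 1) (by omega) hir]
    exact Finset.mem_Ioc.mpr ⟨by omega, le_refl _⟩
  rw [Finset.mem_filter, Finset.mem_Ioc] at hcmem
  have hklam := hlam i hi1 (by omega)
  have hcup : (i, nu (i + 1) + rowCnt kap nu t (i + 1) h) ∈ skewDiag r kap nu :=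
    mem_skewDiag.mpr ⟨hi1, by omega, by omega, by omega⟩
  have hcdn : (i + 1, nu (i + 1) + rowCnt kap nu t (i + 1) h) ∈ skewDiag r kap nu :=
    mem_skewDiag.mpr ⟨by omega, hir, hcmem.1.1, hcmem.1.2⟩
  have hcol := ht.2.2.2.1 i (i + 1) _ hcup hcdn (by omega)
  have hcol2 : t (i, nu (i + 1) + rowCnt kap nu t (i + 1) h) ≤ t (i + 1, nu (i + 1) + rowCnt kap nu t (i + 1) h) := hcol
  have := (le_iff_col ht i hi1 (by omega) (h := h)
    (c := nu (i + 1) + rowCnt kap nu t (i + 1) h)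
    (Finset.mem_Ioc.mpr ⟨by omega, by omega⟩)).mp (by omega)
  omega

lemma sig_lt (ht : IsRST r kap nu f t)
    (hlam : ∀ i, 1 ≤ i → i < r → kap (i + 1) ≤ kap i)
    (hmu : ∀ i, 1 ≤ i → i < r → nu (i + 1) ≤ nu i)
    {i j : ℕ} (hi1 : 1 ≤ i) (hij : i < j) (h : ℕ) :
    j ≤ r → sigf kap nu t j h < sigf kap nu t i h := by
  induction j, hij using Nat.le_induction with
  | base =>
    intro hjr
    have := sig_adj ht hlam hmu i hi1 (by omega) h
    simp only [sigf, Nat.succ_eq_add_one]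
    push_cast
    omega
  | succ j hij ih =>
    intro hjr
    have h1 := sig_adj ht hlam hmu j (by omega) (by omega) h
    have h2 := ih (by omega)
    simp only [sigf, Nat.succ_eq_add_one] at h2 ⊢
    push_cast at h2 ⊢
    omega

end MainLemmas


lemma g_mono {g : ℕ → ℤ} {n : ℕ}
    (hg : ∀ k, k < n → g (k + 1) - g k = 0 ∨ g (k + 1) - g k = 1) :
    ∀ a c, a ≤ c → c ≤ n → g a ≤ g c ∧ g c ≤ g a + ((c : ℤ) - (a : ℤ)) := by
  intro a c hac hcn
  induction c with
  | zero =>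
    have : a = 0 := by omega
    subst this; simp
  | succ c ih =>
    rcases Nat.lt_or_ge a (c + 1) with hlt | hge
    · have h1 := ih (by omega) (by omega)
      have h2 := hg c (by omega)
      constructor <;> push_cast <;> omega
    · have : a = c + 1 := by omega
      subst this
      constructor <;> simp

lemma paths_disjoint {r : ℕ} {kap nu f : ℕ → ℕ} {t : ℕ × ℕ → ℕ} (ht : IsRST r kap nu f t)
    (hlam : ∀ i, 1 ≤ i → i < r → kap (i + 1) ≤ kap i)
    (hmu : ∀ i, 1 ≤ i → i < r → nu (i + 1) ≤ nu i)
    {i j : ℕ} (hi1 : 1 ≤ i) (hij : i < j) (hjr : j ≤ r) :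
    (canon (sigf kap nu t i) (f i)).Disjoint (canon (sigf kap nu t j) (f j)) := by
  intro a hai haj
  rw [mem_canon] at hai haj
  obtain ⟨h1, hh1, rfl⟩ := hai
  obtain ⟨h2, hh2, heq⟩ := haj
  have hsnd : h1 = h2 := by simpa using congrArg Prod.snd heq
  subst hsnd
  have hfst : sigf kap nu t i h1 = sigf kap nu t j h1 := by
    simpa using congrArg Prod.fst heq
  have := sig_lt ht hlam hmu hi1 hij h1 hjr
  omega

end LGV

set_option maxHeartbeats 1000000 in


/-- Lattice path interpretation of row-strict flagged skew factorial Schur polynomials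
(Lindström–Gessel–Viennot setup):  with `u_i = (λ_i − i, f_i)` and `v_i = (μ_i − i, 0)`,
`s̃_{λ/μ,f}(z|b) = Σ_{(P_1,…,P_r)} ∏_i w(P_i)`, the sum over `r`-tuples of pairwise
vertex-disjoint directed paths `P_i` from `u_i` to `v_i`. -/
theorem statement_14 (R : Type*) [CommRing R] (r : ℕ) (lam mu f : ℕ → ℕ)
    (z : ℕ → R) (b : ℤ → R)
    (hlam : ∀ i, 1 ≤ i → i < r → lam (i + 1) ≤ lam i)
    (hmu : ∀ i, 1 ≤ i → i < r → mu (i + 1) ≤ mu i)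
    (hsub : ∀ i, 1 ≤ i → i ≤ r → mu i ≤ lam i) :
    sTilde r lam mu f z b =
      ∑ᶠ P ∈ {P : Fin r → List (ℤ × ℕ) |
          (∀ i : Fin r,
            IsLatticePath ((lam ((i : ℕ) + 1) : ℤ) - ((i : ℕ) + 1 : ℕ), f ((i : ℕ) + 1))
              ((mu ((i : ℕ) + 1) : ℤ) - ((i : ℕ) + 1 : ℕ), 0) (P i)) ∧
          (∀ i j : Fin r, i ≠ j → (P i).Disjoint (P j))},
        ∏ i : Fin r, pathWt z b (P i) := by
  classical
  rw [sTilde]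
  refine finsum_mem_eq_of_bijOn
    (fun t => fun i : Fin r => LGV.canon (LGV.sigf lam mu t ((i : ℕ) + 1)) (f ((i : ℕ) + 1)))
    ⟨?_, ?_, ?_⟩ ?_
  · -- MapsTo
    intro t ht
    have ht' : IsRST r lam mu f t := ht
    refine ⟨fun i => ?_, fun i j hij => ?_⟩
    · have hi1 : (1 : ℕ) ≤ (i : ℕ) + 1 := by omega
      have hir : (i : ℕ) + 1 ≤ r := i.isLt
      have hp := LGV.isLatticePath_canon
        (g := LGV.sigf lam mu t ((i : ℕ) + 1)) (n := f ((i : ℕ) + 1))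
        (fun k _ => LGV.sigf_step ht' ((i : ℕ) + 1) hi1 hir k)
      rwa [LGV.sigf_top ht' _ hi1 hir (hsub _ hi1 hir),
        LGV.sigf_zero ht' _ hi1 hir] at hp
    · rcases Nat.lt_or_ge (i : ℕ) (j : ℕ) with h | h
      · exact LGV.paths_disjoint ht' hlam hmu (by omega) (by omega) (by omega)
      · have h2 : (j : ℕ) < (i : ℕ) := by
          rcases Nat.lt_or_ge (j : ℕ) (i : ℕ) with h' | h'
          · exact h'
          · exact absurd (Fin.ext (by omega)) hij
        exact fun a ha hb =>
          (LGV.paths_disjoint ht' hlam hmu (by omega) (by omega) (by omega)) hb ha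
  · -- InjOn
    intro t1 h1 t2 h2 heq
    have h1' : IsRST r lam mu f t1 := h1
    have h2' : IsRST r lam mu f t2 := h2
    funext p
    obtain ⟨i, c⟩ := p
    by_cases hp : (i, c) ∈ skewDiag r lam mu
    · obtain ⟨hi1, hir, hc1, hc2⟩ := LGV.mem_skewDiag.mp hp
      have hfin : i - 1 < r := by omega
      have heqi := congrFun heq ⟨i - 1, hfin⟩
      simp only [] at heqi
      have hval : ((⟨i - 1, hfin⟩ : Fin r) : ℕ) + 1 = i := by
        show i - 1 + 1 = i; omega
      rw [hval] at heqi
      have hgeq := LGV.canon_inj heqi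
      have hcIoc : c ∈ Finset.Ioc (mu i) (lam i) := Finset.mem_Ioc.mpr ⟨hc1, hc2⟩
      have hcnt : ∀ k, k ≤ f i → LGV.rowCnt lam mu t1 i k = LGV.rowCnt lam mu t2 i k := by
        intro k hk
        have := hgeq k hk
        simp only [LGV.sigf] at this
        omega
      have h12 : t1 (i, c) ≤ t2 (i, c) := by
        have hfl : t2 (i, c) ≤ f i := h2'.2.2.2.2 _ hp
        have hx := (LGV.le_iff_col h2' i hi1 hir hcIoc).mp (le_refl _)
        exact (LGV.le_iff_col h1' i hi1 hir hcIoc).mpr (by rw [hcnt _ hfl]; exact hx)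
      have h21 : t2 (i, c) ≤ t1 (i, c) := by
        have hfl : t1 (i, c) ≤ f i := h1'.2.2.2.2 _ hp
        have hx := (LGV.le_iff_col h1' i hi1 hir hcIoc).mp (le_refl _)
        exact (LGV.le_iff_col h2' i hi1 hir hcIoc).mpr (by rw [← hcnt _ hfl]; exact hx)
      omega
    · rw [h1'.1 _ hp, h2'.1 _ hp]
  · -- SurjOn
    intro P hP
    obtain ⟨hpath, hdisj⟩ := hP
    choose g hg1 hg0 hgstep hgcanon using fun i : Fin r => LGV.path_canonical (hpath i)
    set G : ℕ → ℕ → ℤ := fun i k => if h : 1 ≤ i ∧ i ≤ r then g ⟨i - 1, by omega⟩ k else 0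
      with hG
    have hGdef : ∀ i₀ : Fin r, ∀ k, G ((i₀ : ℕ) + 1) k = g i₀ k := by
      intro i₀ k
      simp only [hG]
      rw [dif_pos ⟨by omega, by omega⟩]
      have : (⟨(i₀ : ℕ) + 1 - 1, by omega⟩ : Fin r) = i₀ := by
        apply Fin.ext
        show (i₀ : ℕ) + 1 - 1 = (i₀ : ℕ)
        omega
      rw [this]
    have hrow : ∀ i (hi1 : 1 ≤ i) (hir : i ≤ r),
        G i (f i) = (lam i : ℤ) - (i : ℤ) ∧ G i 0 = (mu i : ℤ) - (i : ℤ) ∧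
        (∀ k, k < f i → G i (k + 1) - G i k = 0 ∨ G i (k + 1) - G i k = 1) ∧
        P ⟨i - 1, by omega⟩ = LGV.canon (G i) (f i) := by
      intro i hi1 hir
      have hfin : i - 1 < r := by omega
      have hval : ((⟨i - 1, hfin⟩ : Fin r) : ℕ) + 1 = i := by
        show i - 1 + 1 = i; omega
      have hGg : ∀ k, G i k = g ⟨i - 1, hfin⟩ k := by
        intro k
        conv_lhs => rw [← hval]
        exact hGdef ⟨i - 1, hfin⟩ k
      have ha := hg1 ⟨i - 1, hfin⟩
      have hb := hg0 ⟨i - 1, hfin⟩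
      have hst := hgstep ⟨i - 1, hfin⟩
      have hcan := hgcanon ⟨i - 1, hfin⟩
      rw [hval] at ha hb hst hcan
      refine ⟨by rw [hGg]; exact ha, by rw [hGg]; exact hb,
        fun k hk => by rw [hGg, hGg]; exact hst k hk, ?_⟩
      rw [hcan]
      exact LGV.canon_congr (fun k _ => (hGg k).symm)
    have hmono : ∀ i, 1 ≤ i → i ≤ r → ∀ a c, a ≤ c → c ≤ f i → G i a ≤ G i c :=
      fun i hi1 hir a c hac hcf => (LGV.g_mono (hrow i hi1 hir).2.2.1 a c hac hcf).1
    have hord : ∀ i, 1 ≤ i → i + 1 ≤ r → ∀ h, h ≤ f i → h ≤ f (i + 1) →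
        G (i + 1) h < G i h := by
      intro i hi1 hir h
      induction h with
      | zero =>
        intro _ _
        rw [(hrow i hi1 (by omega)).2.1, (hrow (i + 1) (by omega) hir).2.1]
        have := hmu i hi1 (by omega)
        push_cast
        omega
      | succ h ih =>
        intro hf1 hf2
        have hlt := ih (by omega) (by omega)
        have hs1 := (hrow i hi1 (by omega)).2.2.1 h (by omega)
        have hs2 := (hrow (i + 1) (by omega) hir).2.2.1 h (by omega)
        have hne : G i (h + 1) ≠ G (i + 1) (h + 1) := by
          intro hcontra
          have hm1 : ((G i (h + 1), h + 1) : ℤ × ℕ) ∈ P ⟨i - 1, by omega⟩ := by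
            rw [(hrow i hi1 (by omega)).2.2.2]
            exact LGV.mem_canon.mpr ⟨h + 1, by omega, rfl⟩
          have hm2 : ((G i (h + 1), h + 1) : ℤ × ℕ) ∈ P ⟨i + 1 - 1, by omega⟩ := by
            rw [(hrow (i + 1) (by omega) hir).2.2.2]
            exact LGV.mem_canon.mpr ⟨h + 1, by omega, by rw [hcontra]⟩
          exact hdisj _ _ (by simp only [ne_eq, Fin.mk.injEq]; omega) hm1 hm2
        omega
    set T : ℕ × ℕ → ℕ := fun p =>
      if p ∈ skewDiag r lam mu then sInf {k | ((p.2 : ℤ) - (p.1 : ℤ)) ≤ G p.1 k} else 0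
      with hTdef
    have hToff : ∀ p, p ∉ skewDiag r lam mu → T p = 0 := by
      intro p hp; simp only [hTdef]; rw [if_neg hp]
    have hTon : ∀ i c, (i, c) ∈ skewDiag r lam mu →
        T (i, c) = sInf {k | ((c : ℤ) - (i : ℤ)) ≤ G i k} := by
      intro i c hp; simp only [hTdef]; rw [if_pos hp]
    have hbox : ∀ i c, 1 ≤ i → i ≤ r → mu i < c → c ≤ lam i →
        1 ≤ T (i, c) ∧ T (i, c) ≤ f i ∧ G i (T (i, c)) = (c : ℤ) - (i : ℤ) := by
      intro i c hi1 hir hc1 hc2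
      have hrw := hrow i hi1 hir
      set S : Set ℕ := {k | ((c : ℤ) - (i : ℤ)) ≤ G i k} with hS
      have hmem : T (i, c) = sInf S := hTon i c (LGV.mem_skewDiag.mpr ⟨hi1, hir, hc1, hc2⟩)
      have hne : f i ∈ S := by
        simp only [hS, Set.mem_setOf_eq, hrw.1]; push_cast; omega
      have hinf_mem : sInf S ∈ S := Nat.sInf_mem ⟨f i, hne⟩
      have hinf_le : sInf S ≤ f i := Nat.sInf_le hne
      have h0 : 0 ∉ S := by
        simp only [hS, Set.mem_setOf_eq, hrw.2.1]; push_cast; omega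
      have hpos : 1 ≤ sInf S := by
        rcases Nat.eq_zero_or_pos (sInf S) with h | h
        · exact absurd (h ▸ hinf_mem) h0
        · exact h
      have hpred : sInf S - 1 ∉ S := Nat.notMem_of_lt_sInf (by omega)
      have hstep := hrw.2.2.1 (sInf S - 1) (by omega)
      rw [show sInf S - 1 + 1 = sInf S by omega] at hstep
      have hm1 : (c : ℤ) - (i : ℤ) ≤ G i (sInf S) := hinf_mem
      have hm2 : ¬ ((c : ℤ) - (i : ℤ) ≤ G i (sInf S - 1)) := hpred
      rw [hmem]
      exact ⟨hpos, hinf_le, by omega⟩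
    have hle_iff : ∀ i c k, 1 ≤ i → i ≤ r → mu i < c → c ≤ lam i → k ≤ f i →
        (T (i, c) ≤ k ↔ (c : ℤ) - (i : ℤ) ≤ G i k) := by
      intro i c k hi1 hir hc1 hc2 hkf
      obtain ⟨hp, hf, hex⟩ := hbox i c hi1 hir hc1 hc2
      constructor
      · intro hle
        calc (c : ℤ) - (i : ℤ) = G i (T (i, c)) := hex.symm
          _ ≤ G i k := hmono i hi1 hir _ k hle hkf
      · intro hle
        rw [hTon i c (LGV.mem_skewDiag.mpr ⟨hi1, hir, hc1, hc2⟩)]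
        exact Nat.sInf_le hle
    have hmu' : ∀ i j, 1 ≤ i → i ≤ j → j ≤ r → mu j ≤ mu i := by
      intro i j hi1 hij
      induction j, hij using Nat.le_induction with
      | base => intro _; exact le_refl _
      | succ j hij ih =>
        intro hjr
        exact le_trans (hmu j (by omega) (by omega)) (ih (by omega))
    have hlam' : ∀ i j, 1 ≤ i → i ≤ j → j ≤ r → lam j ≤ lam i := by
      intro i j hi1 hij
      induction j, hij using Nat.le_induction with
      | base => intro _; exact le_refl _
      | succ j hij ih =>
        intro hjr
        exact le_trans (hlam j (by omega) (by omega)) (ih (by omega))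
    have hcol_adj : ∀ i c, (i, c) ∈ skewDiag r lam mu → (i + 1, c) ∈ skewDiag r lam mu →
        T (i, c) ≤ T (i + 1, c) := by
      intro i c hp hp'
      obtain ⟨h1, h2, h3, h4⟩ := LGV.mem_skewDiag.mp hp
      obtain ⟨h1', h2', h3', h4'⟩ := LGV.mem_skewDiag.mp hp'
      obtain ⟨hp1, hf1, he1⟩ := hbox i c h1 h2 h3 h4
      obtain ⟨hp2, hf2, he2⟩ := hbox (i + 1) c h1' h2' h3' h4'
      by_contra hgt
      push_neg at hgt
      have hk1 : T (i + 1, c) ≤ f i := by omega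
      have hGlt : ¬ ((c : ℤ) - (i : ℤ) ≤ G i (T (i + 1, c))) := by
        intro hle
        have := (hle_iff i c (T (i + 1, c)) h1 h2 h3 h4 hk1).mpr hle
        omega
      have hOrd := hord i h1 h2' (T (i + 1, c)) hk1 hf2
      rw [he2] at hOrd
      push_cast at hOrd hGlt
      omega
    have hTrst : IsRST r lam mu f T := by
      refine ⟨hToff, ?_, ?_, ?_, ?_⟩
      · rintro ⟨i, c⟩ hp
        obtain ⟨ha, hb, hc, hd⟩ := LGV.mem_skewDiag.mp hp
        exact (hbox i c ha hb hc hd).1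
      · intro i c c' hp hp' hcc
        obtain ⟨ha, hb, hc, hd⟩ := LGV.mem_skewDiag.mp hp
        obtain ⟨-, -, hc', hd'⟩ := LGV.mem_skewDiag.mp hp'
        obtain ⟨hp1, hf1, he1⟩ := hbox i c ha hb hc hd
        obtain ⟨hp2, hf2, he2⟩ := hbox i c' ha hb hc' hd'
        by_contra hge
        push_neg at hge
        have := hmono i ha hb _ _ hge hf1
        omega
      · intro i i' c hp hp' hii
        obtain ⟨ha, hb, hc, hd⟩ := LGV.mem_skewDiag.mp hp
        revert hp'
        induction i', hii using Nat.le_induction with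
        | base => intro _; exact le_refl _
        | succ i' hii ih =>
          intro hp'
          obtain ⟨h1', h2', h3', h4'⟩ := LGV.mem_skewDiag.mp hp'
          have hmid : (i', c) ∈ skewDiag r lam mu := by
            refine LGV.mem_skewDiag.mpr ⟨by omega, by omega, ?_, ?_⟩
            · have := hmu' i i' ha hii (by omega); omega
            · have := hlam' i' (i' + 1) (by omega) (by omega) h2'; omega
          exact le_trans (ih hmid) (hcol_adj i' c hmid hp')
      · rintro ⟨i, c⟩ hp
        obtain ⟨ha, hb, hc, hd⟩ := LGV.mem_skewDiag.mp hp
        exact (hbox i c ha hb hc hd).2.1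
    have hsig : ∀ i, 1 ≤ i → i ≤ r → ∀ k, k ≤ f i → LGV.sigf lam mu T i k = G i k := by
      intro i hi1 hir k hk
      have hrw := hrow i hi1 hir
      have hX1 : (mu i : ℤ) - (i : ℤ) ≤ G i k := by
        have := hmono i hi1 hir 0 k (by omega) hk
        rw [hrw.2.1] at this; exact this
      have hX2 : G i k ≤ (lam i : ℤ) - (i : ℤ) := by
        have := hmono i hi1 hir k (f i) hk (le_refl _)
        rw [hrw.1] at this; exact this
      have hflt : (Finset.Ioc (mu i) (lam i)).filter (fun c => T (i, c) ≤ k) =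
          Finset.Ioc (mu i) ((G i k + (i : ℤ)).toNat) := by
        ext c
        simp only [Finset.mem_filter, Finset.mem_Ioc]
        constructor
        · rintro ⟨⟨hc1, hc2⟩, hle⟩
          have := (hle_iff i c k hi1 hir hc1 hc2 hk).mp hle
          omega
        · rintro ⟨hc1, hc2⟩
          have hcl : c ≤ lam i := by omega
          exact ⟨⟨hc1, hcl⟩, (hle_iff i c k hi1 hir hc1 hcl hk).mpr (by omega)⟩
      rw [LGV.sigf, LGV.rowCnt, hflt, Nat.card_Ioc]
      omega
    refine ⟨T, hTrst, ?_⟩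
    funext i₀
    simp only []
    have hfeq : (⟨(i₀ : ℕ) + 1 - 1, by omega⟩ : Fin r) = i₀ := by
      apply Fin.ext
      show (i₀ : ℕ) + 1 - 1 = (i₀ : ℕ)
      omega
    rw [← hfeq, (hrow ((i₀ : ℕ) + 1) (by omega) (by omega)).2.2.2]
    exact LGV.canon_congr (fun k hk => hsig ((i₀ : ℕ) + 1) (by omega) (by omega) k hk)
  · -- weights
    intro t ht
    have ht' : IsRST r lam mu f t := ht
    have hin : ∀ i ∈ Finset.range r, (∏ j ∈ Finset.range (lam (i + 1) - mu (i + 1)),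
        (z (t (i + 1, mu (i + 1) + 1 + j)) +
          b ((t (i + 1, mu (i + 1) + 1 + j) : ℤ) + ((i : ℤ) + 1) -
            ((mu (i + 1) : ℤ) + 1 + (j : ℤ))))) =
        pathWt z b (LGV.canon (LGV.sigf lam mu t (i + 1)) (f (i + 1))) := by
      intro i hi
      rw [Finset.mem_range] at hi
      rw [← LGV.row_weight z b ht' (i + 1) (by omega) (by omega)]
      apply Finset.prod_congr rfl
      intro j hj
      have harg : (t (i + 1, mu (i + 1) + 1 + j) : ℤ) + ((i : ℤ) + 1) -
            ((mu (i + 1) : ℤ) + 1 + (j : ℤ)) =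
          (t (i + 1, mu (i + 1) + 1 + j) : ℤ) + (((i + 1 : ℕ) : ℤ)) -
            ((mu (i + 1) : ℤ) + 1 + (j : ℤ)) := by push_cast; ring
      rw [harg]
    calc rstWeight r lam mu z b t
        = ∏ i ∈ Finset.range r,
            pathWt z b (LGV.canon (LGV.sigf lam mu t (i + 1)) (f (i + 1))) :=
          Finset.prod_congr rfl hin
      _ = ∏ i : Fin r,
            pathWt z b (LGV.canon (LGV.sigf lam mu t ((i : ℕ) + 1)) (f ((i : ℕ) + 1))) :=
          (Fin.prod_univ_eq_prod_range _ r).symm
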